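/- arXiv:cond-mat/0408393 — 4 statements merged into one kernel-verified Lean document; each statement's English description precedes it below -/
import Mathlib

section
/- For t₁, t₂, t₃ ∈ (0,1) with αμ and Aμ defined as for the triangular lattice (α₀ = 1 + t₁t₂t₃, α₁ = t₁ + t₂t₃, α₂ = t₂ + t₃t₁, α₃ = t₃ + t₁t₂, A₀ = Σ αμ², A₁ = 2(α₀α₁ − α₂α₃), A₂ = 2(α₀α₂ − α₃α₁), A₃ = 2(α₀α₃ − α₁α₂)), the condition A₀ − A₁ − A₂ − A₃ = 0 holds if and only if α₀ − α₁ − α₂ − α₃ = 0. -/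
theorem stmt_2 (t₁ t₂ t₃ : ℝ)
    (h₁ : t₁ ∈ Set.Ioo (0:ℝ) 1) (h₂ : t₂ ∈ Set.Ioo (0:ℝ) 1) (h₃ : t₃ ∈ Set.Ioo (0:ℝ) 1) :
    let α₀ := 1 + t₁ * t₂ * t₃
    let α₁ := t₁ + t₂ * t₃
    let α₂ := t₂ + t₃ * t₁
    let α₃ := t₃ + t₁ * t₂
    let A₀ := α₀^2 + α₁^2 + α₂^2 + α₃^2
    let A₁ := 2 * (α₀ * α₁ - α₂ * α₃)
    let A₂ := 2 * (α₀ * α₂ - α₃ * α₁)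
    let A₃ := 2 * (α₀ * α₃ - α₁ * α₂)
    (A₀ - A₁ - A₂ - A₃ = 0 ↔ α₀ - α₁ - α₂ - α₃ = 0) := by
  intro α₀ α₁ α₂ α₃ A₀ A₁ A₂ A₃
  have key : A₀ - A₁ - A₂ - A₃ = (α₀ - α₁ - α₂ - α₃)^2 := by
    simp only [A₀, A₁, A₂, A₃]; ring
  rw [key, pow_eq_zero_iff (two_ne_zero)]
end

section
/- For t₁, t₂, t₃ ∈ (0,1) with the triangular-lattice Aμ as above, one has (A₂A₃ + A₀A₁)/A₁² ≥ 1, i.e. A₂A₃ + A₀A₁ ≥ A₁². -/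
theorem stmt_3 (t₁ t₂ t₃ : ℝ)
    (h₁ : t₁ ∈ Set.Ioo (0:ℝ) 1) (h₂ : t₂ ∈ Set.Ioo (0:ℝ) 1) (h₃ : t₃ ∈ Set.Ioo (0:ℝ) 1) :
    let α₀ := 1 + t₁ * t₂ * t₃
    let α₁ := t₁ + t₂ * t₃
    let α₂ := t₂ + t₃ * t₁
    let α₃ := t₃ + t₁ * t₂
    let A₀ := α₀^2 + α₁^2 + α₂^2 + α₃^2
    let A₁ := 2 * (α₀ * α₁ - α₂ * α₃)
    let A₂ := 2 * (α₀ * α₂ - α₃ * α₁)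
    let A₃ := 2 * (α₀ * α₃ - α₁ * α₂)
    A₂ * A₃ + A₀ * A₁ ≥ A₁^2 := by
  obtain ⟨a1,b1⟩ := h₁; obtain ⟨a2,b2⟩ := h₂; obtain ⟨a3,b3⟩ := h₃
  intro α₀ α₁ α₂ α₃ A₀ A₁ A₂ A₃
  have hP : (0:ℝ) ≤ (1 - t₂^2) * (1 - t₃^2) := mul_nonneg (by nlinarith) (by nlinarith)
  have hQ : (1 - t₂^2) * (1 - t₃^2) ≤ (1 + t₂^2) * (1 + t₃^2) := by nlinarith [mul_pos a2 a3]
  have ht : (0:ℝ) ≤ 2*t₁*(1+t₁^2) - 4*t₁^2 := by nlinarith [sq_nonneg (1 - t₁), a1.le]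
  have hbr : (0:ℝ) ≤ 4*t₂*t₃*(1+t₁^2)^2 + 2*t₁*(1+t₁^2)*((1+t₂^2)*(1+t₃^2)) -
      4*t₁^2*((1-t₂^2)*(1-t₃^2)) := by
    nlinarith [mul_nonneg (mul_nonneg (mul_pos a2 a3).le (sq_nonneg (1+t₁^2))) (by norm_num : (0:ℝ) ≤ 4),
      mul_nonneg (mul_nonneg (by nlinarith : (0:ℝ) ≤ 2*t₁*(1+t₁^2)) (by linarith : (0:ℝ) ≤ (1+t₂^2)*(1+t₃^2) - (1-t₂^2)*(1-t₃^2))) (by norm_num : (0:ℝ) ≤ 1),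
      mul_nonneg ht hP]
  have key : A₂ * A₃ + A₀ * A₁ - A₁^2 = (1 - t₂^2) * (1 - t₃^2) *
      (4*t₂*t₃*(1+t₁^2)^2 + 2*t₁*(1+t₁^2)*((1+t₂^2)*(1+t₃^2)) -
        4*t₁^2*((1-t₂^2)*(1-t₃^2))) := by
    simp only [A₀, A₁, A₂, A₃, α₀, α₁, α₂, α₃]; ring
  nlinarith [mul_nonneg hP hbr]
end

section
/- For t₁, t₂, t₃ ∈ (0,1) with the triangular-lattice Aμ defined as above, and for any x ∈ [−1,1], the quantity (A₀ − A₁x)² − (A₂² + A₃² + 2A₂A₃x) is nonnegative; equivalently, G(x) = √(A₂² + A₃² + 2A₂A₃x)/(A₀ − A₁x) satisfies G(x) ≤ 1. -/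
set_option maxHeartbeats 1000000 in
theorem stmt_6 (t₁ t₂ t₃ : ℝ)
    (h₁ : t₁ ∈ Set.Ioo (0:ℝ) 1) (h₂ : t₂ ∈ Set.Ioo (0:ℝ) 1) (h₃ : t₃ ∈ Set.Ioo (0:ℝ) 1) :
    let α₀ := 1 + t₁ * t₂ * t₃
    let α₁ := t₁ + t₂ * t₃
    let α₂ := t₂ + t₃ * t₁
    let α₃ := t₃ + t₁ * t₂
    let A₀ := α₀^2 + α₁^2 + α₂^2 + α₃^2
    let A₁ := 2 * (α₀ * α₁ - α₂ * α₃)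
    let A₂ := 2 * (α₀ * α₂ - α₃ * α₁)
    let A₃ := 2 * (α₀ * α₃ - α₁ * α₂)
    ∀ x ∈ Set.Icc (-1:ℝ) 1,
      0 ≤ (A₀ - A₁ * x)^2 - (A₂^2 + A₃^2 + 2 * A₂ * A₃ * x) ∧
      Real.sqrt (A₂^2 + A₃^2 + 2 * A₂ * A₃ * x) / (A₀ - A₁ * x) ≤ 1 := by
  dsimp only
  rintro x ⟨hx1, hx2⟩
  obtain ⟨ht1, ht1'⟩ := h₁
  obtain ⟨ht2, ht2'⟩ := h₂
  obtain ⟨ht3, ht3'⟩ := h₃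
  set α₀ := 1 + t₁ * t₂ * t₃ with hα₀
  set α₁ := t₁ + t₂ * t₃ with hα₁
  set α₂ := t₂ + t₃ * t₁ with hα₂
  set α₃ := t₃ + t₁ * t₂ with hα₃
  have ha : (0:ℝ) ≤ (1 + x) / 2 := by linarith
  have hb : (0:ℝ) ≤ (1 - x) / 2 := by linarith
  set a := (1 + x) / 2 with ha_def
  set b := (1 - x) / 2 with hb_def
  set X := (α₀ - α₁)^2 - (α₂ + α₃)^2 with hX
  set Y := (α₀ + α₁)^2 - (α₂ - α₃)^2 with hY
  set C := 4 * (α₀ * α₁ - α₂ * α₃) with hC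
  clear_value α₀ α₁ α₂ α₃ a b X Y C
  -- main algebraic identity
  have hid : (α₀ ^ 2 + α₁ ^ 2 + α₂ ^ 2 + α₃ ^ 2 - 2 * (α₀ * α₁ - α₂ * α₃) * x) ^ 2 -
        ((2 * (α₀ * α₂ - α₃ * α₁)) ^ 2 + (2 * (α₀ * α₃ - α₁ * α₂)) ^ 2 +
          2 * (2 * (α₀ * α₂ - α₃ * α₁)) * (2 * (α₀ * α₃ - α₁ * α₂)) * x)
      = a * X^2 + b * Y^2 - a * b * C^2 := by
    rw [hX, hY, hC, ha_def, hb_def]; ring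
  -- key t-structure inequality: C² ≤ X² + Y²
  have hp2 : (0:ℝ) < α₂ := by rw [hα₂]; nlinarith [mul_pos ht3 ht1]
  have hp3 : (0:ℝ) < α₃ := by rw [hα₃]; nlinarith [mul_pos ht1 ht2]
  have hn : (0:ℝ) ≤ α₂ * α₃ := (mul_pos hp2 hp3).le
  have hq2 : (0:ℝ) < 1 - t₂^2 := by nlinarith
  have hq3 : (0:ℝ) < 1 - t₃^2 := by nlinarith
  have hm : (0:ℝ) ≤ t₁ * ((1 - t₂^2) * (1 - t₃^2)) := (mul_pos ht1 (mul_pos hq2 hq3)).le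
  have hkey : C^2 ≤ X^2 + Y^2 := by
    have hident : X^2 + Y^2 - C^2
        = 2 * ((1 - t₁^2) * (1 - t₂^2) * (1 - t₃^2))^2
          + 32 * (α₂ * α₃) * (t₁ * ((1 - t₂^2) * (1 - t₃^2)) + α₂ * α₃) := by
      rw [hX, hY, hC, hα₀, hα₁, hα₂, hα₃]; ring
    have e1 : (0:ℝ) ≤ 2 * ((1 - t₁^2) * (1 - t₂^2) * (1 - t₃^2))^2 := by positivity
    have e2 : (0:ℝ) ≤ 32 * (α₂ * α₃) * (t₁ * ((1 - t₂^2) * (1 - t₃^2)) + α₂ * α₃) := by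
      apply mul_nonneg (by linarith)
      linarith
    linarith [hident, e1, e2]
  have hab : a + b = 1 := by rw [ha_def, hb_def]; ring
  -- first part : f ≥ 0
  have hf : 0 ≤ (α₀ ^ 2 + α₁ ^ 2 + α₂ ^ 2 + α₃ ^ 2 - 2 * (α₀ * α₁ - α₂ * α₃) * x) ^ 2 -
        ((2 * (α₀ * α₂ - α₃ * α₁)) ^ 2 + (2 * (α₀ * α₃ - α₁ * α₂)) ^ 2 +
          2 * (2 * (α₀ * α₂ - α₃ * α₁)) * (2 * (α₀ * α₃ - α₁ * α₂)) * x) := by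
    rw [hid]
    have h1 : a * b * C^2 ≤ a * b * (X^2 + Y^2) :=
      mul_le_mul_of_nonneg_left hkey (mul_nonneg ha hb)
    have h2 : a * b * (X^2 + Y^2) ≤ a * X^2 + b * Y^2 := by
      have hident2 : a * X^2 + b * Y^2 - a * b * (X^2 + Y^2) = a * a * X^2 + b * b * Y^2 := by
        linear_combination (-(a * X^2) - b * Y^2) * hab
      linarith [hident2, mul_nonneg (mul_nonneg ha ha) (sq_nonneg X),
        mul_nonneg (mul_nonneg hb hb) (sq_nonneg Y)]
    linarith
  refine ⟨hf, ?_⟩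
  -- positivity of denominator
  have hv : (0:ℝ) < α₂ + α₃ := by linarith
  have hw : (0:ℝ) < α₀ + α₁ := by
    rw [hα₀, hα₁]
    have g1 := mul_pos (mul_pos ht1 ht2) ht3
    have g2 := mul_pos ht2 ht3
    linarith
  have hP : (0:ℝ) < (α₀ - α₁)^2 + (α₂ + α₃)^2 := by positivity
  have hQ : (0:ℝ) < (α₀ + α₁)^2 + (α₂ - α₃)^2 := by positivity
  have hdid : α₀ ^ 2 + α₁ ^ 2 + α₂ ^ 2 + α₃ ^ 2 - 2 * (α₀ * α₁ - α₂ * α₃) * x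
      = a * ((α₀ - α₁)^2 + (α₂ + α₃)^2) + b * ((α₀ + α₁)^2 + (α₂ - α₃)^2) := by
    rw [ha_def, hb_def]; ring
  have hd : 0 < α₀ ^ 2 + α₁ ^ 2 + α₂ ^ 2 + α₃ ^ 2 - 2 * (α₀ * α₁ - α₂ * α₃) * x := by
    rw [hdid]
    rcases le_or_gt a 0 with h | h
    · have haz : a = 0 := le_antisymm h ha
      have hbz : b = 1 := by linarith
      rw [haz, hbz]; linarith
    · have g1 := mul_pos h hP
      have g2 := mul_nonneg hb hQ.le
      linarith
  -- B ≥ 0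
  have hB : 0 ≤ (2 * (α₀ * α₂ - α₃ * α₁)) ^ 2 + (2 * (α₀ * α₃ - α₁ * α₂)) ^ 2 +
        2 * (2 * (α₀ * α₂ - α₃ * α₁)) * (2 * (α₀ * α₃ - α₁ * α₂)) * x := by
    have : (2 * (α₀ * α₂ - α₃ * α₁)) ^ 2 + (2 * (α₀ * α₃ - α₁ * α₂)) ^ 2 +
        2 * (2 * (α₀ * α₂ - α₃ * α₁)) * (2 * (α₀ * α₃ - α₁ * α₂)) * x
        = a * (2 * (α₀ * α₂ - α₃ * α₁) + 2 * (α₀ * α₃ - α₁ * α₂))^2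
          + b * (2 * (α₀ * α₂ - α₃ * α₁) - 2 * (α₀ * α₃ - α₁ * α₂))^2 := by
      rw [ha_def, hb_def]; ring
    rw [this]
    positivity
  rw [div_le_one hd]
  have hle : (2 * (α₀ * α₂ - α₃ * α₁)) ^ 2 + (2 * (α₀ * α₃ - α₁ * α₂)) ^ 2 +
        2 * (2 * (α₀ * α₂ - α₃ * α₁)) * (2 * (α₀ * α₃ - α₁ * α₂)) * x
      ≤ (α₀ ^ 2 + α₁ ^ 2 + α₂ ^ 2 + α₃ ^ 2 - 2 * (α₀ * α₁ - α₂ * α₃) * x)^2 := by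
    linarith
  calc Real.sqrt ((2 * (α₀ * α₂ - α₃ * α₁)) ^ 2 + (2 * (α₀ * α₃ - α₁ * α₂)) ^ 2 +
        2 * (2 * (α₀ * α₂ - α₃ * α₁)) * (2 * (α₀ * α₃ - α₁ * α₂)) * x)
      ≤ Real.sqrt ((α₀ ^ 2 + α₁ ^ 2 + α₂ ^ 2 + α₃ ^ 2 - 2 * (α₀ * α₁ - α₂ * α₃) * x)^2) :=
        Real.sqrt_le_sqrt hle
    _ = α₀ ^ 2 + α₁ ^ 2 + α₂ ^ 2 + α₃ ^ 2 - 2 * (α₀ * α₁ - α₂ * α₃) * x :=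
        Real.sqrt_sq hd.le
end

section
/- For t₁, t₂, t₃ ∈ (0,1) with the triangular-lattice Aμ as above, if x ∈ [−1,1) (i.e. x ≠ 1), then (A₀ − A₁x)² − (A₂² + A₃² + 2A₂A₃x) > 0 strictly. -/
theorem stmt_7 (t₁ t₂ t₃ : ℝ)
    (h₁ : t₁ ∈ Set.Ioo (0:ℝ) 1) (h₂ : t₂ ∈ Set.Ioo (0:ℝ) 1) (h₃ : t₃ ∈ Set.Ioo (0:ℝ) 1) :
    let α₀ := 1 + t₁ * t₂ * t₃
    let α₁ := t₁ + t₂ * t₃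
    let α₂ := t₂ + t₃ * t₁
    let α₃ := t₃ + t₁ * t₂
    let A₀ := α₀^2 + α₁^2 + α₂^2 + α₃^2
    let A₁ := 2 * (α₀ * α₁ - α₂ * α₃)
    let A₂ := 2 * (α₀ * α₂ - α₃ * α₁)
    let A₃ := 2 * (α₀ * α₃ - α₁ * α₂)
    ∀ x ∈ Set.Ico (-1:ℝ) 1,
      0 < (A₀ - A₁ * x)^2 - (A₂^2 + A₃^2 + 2 * A₂ * A₃ * x) := by
  obtain ⟨t1p, t1l⟩ := h₁
  obtain ⟨t2p, t2l⟩ := h₂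
  obtain ⟨t3p, t3l⟩ := h₃
  intro α₀ α₁ α₂ α₃ A₀ A₁ A₂ A₃ x hx
  obtain ⟨hx1, hx2⟩ := hx
  have e1 : A₁ = 2 * t₁ * (1 - t₂^2) * (1 - t₃^2) := by
    simp only [A₁, α₀, α₁, α₂, α₃]; ring
  have e2 : A₂ = 2 * t₂ * (1 - t₁^2) * (1 - t₃^2) := by
    simp only [A₂, α₀, α₁, α₂, α₃]; ring
  have e3 : A₃ = 2 * t₃ * (1 - t₁^2) * (1 - t₂^2) := by
    simp only [A₃, α₀, α₁, α₂, α₃]; ring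
  have hq1 : (0:ℝ) < 1 - t₁^2 := by nlinarith
  have hq2 : (0:ℝ) < 1 - t₂^2 := by nlinarith
  have hq3 : (0:ℝ) < 1 - t₃^2 := by nlinarith
  have A1p : 0 < A₁ := by rw [e1]; positivity
  have A2p : 0 < A₂ := by rw [e2]; positivity
  have A3p : 0 < A₃ := by rw [e3]; positivity
  have hs : 0 ≤ A₀ - A₁ - A₂ - A₃ := by
    have : A₀ - A₁ - A₂ - A₃ = (α₀ - α₁ - α₂ - α₃)^2 := by
      simp only [A₀, A₁, A₂, A₃]; ring
    rw [this]; positivity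
  clear_value α₀ α₁ α₂ α₃ A₀ A₁ A₂ A₃
  clear e1 e2 e3
  have h5 : A₂ + A₃ ≤ A₀ - A₁ * x := by
    have h6 : 0 < A₁ * (1 - x) := mul_pos A1p (by linarith)
    nlinarith
  have h7 : (A₂ + A₃)^2 ≤ (A₀ - A₁ * x)^2 := by
    have : (0:ℝ) ≤ A₂ + A₃ := by linarith
    nlinarith
  have h8 : 0 < 2 * A₂ * A₃ * (1 - x) := by
    have := mul_pos (mul_pos A2p A3p) (show (0:ℝ) < 1 - x by linarith)
    nlinarith
  nlinarith [h7, h8]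
end
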